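/- Let F be a finite field, X an F-vector space of dimension k ≥ 1, and f, g : X → F^Ω F-linear maps. If there exists m ∈ {1,…,k−1} such that Wt(f[B]) = Wt(g[B]) for every m-dimensional subspace B ≤ X, then wt(f(θ)) = wt(g(θ)) for all θ ∈ X. -/

import Mathlib

open scoped Classical
open Finset

/-- ω-weight of a vector β ∈ F^Ω. -/
noncomputable def wwt {F Ω : Type*} [Field F] [Fintype Ω] (ω : Ω → ℝ) (β : Ω → F) : ℝ :=
  ∑ i ∈ univ.filter (fun i => β i ≠ 0), ω i

/-- ω-weight of a set A ⊆ F^Ω. -/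
noncomputable def WWt {F Ω : Type*} [Field F] [Fintype Ω] (ω : Ω → ℝ) (A : Set (Ω → F)) : ℝ :=
  ∑ i ∈ univ.filter (fun i => ∃ β ∈ A, β i ≠ 0), ω i
open Module

lemma wwt_smul {F Ω : Type*} [Field F] [Fintype Ω] (ω : Ω → ℝ) {c : F} (hc : c ≠ 0)
    (β : Ω → F) : wwt ω (c • β) = wwt ω β := by
  unfold wwt
  congr 1
  apply Finset.filter_congr
  intro i _
  simp [Pi.smul_apply, smul_eq_mul, hc]

lemma exists_super {F X : Type*} [Field F] [AddCommGroup X] [Module F X]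
    [FiniteDimensional F X] (d : ℕ) (hd : d ≤ finrank F X) :
    ∀ U : Submodule F X, finrank F U ≤ d → ∃ W : Submodule F X, U ≤ W ∧ finrank F W = d := by
  induction d with
  | zero =>
    intro U hU
    exact ⟨U, le_rfl, Nat.le_antisymm hU (Nat.zero_le _)⟩
  | succ d ih =>
    intro U hU
    rcases Nat.lt_or_ge (finrank F U) (d+1) with hlt | hge
    · obtain ⟨W, hUW, hW⟩ := ih (le_of_lt (Nat.lt_of_lt_of_le (Nat.lt_succ_self d) hd)) U
        (Nat.lt_succ_iff.mp hlt)
      have hWne : W ≠ ⊤ := by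
        intro hTop
        rw [hTop, finrank_top] at hW
        omega
      have hlt2 : W < ⊤ := lt_top_iff_ne_top.mpr hWne
      obtain ⟨x, -, hx⟩ := SetLike.exists_of_lt hlt2
      refine ⟨(F ∙ x) ⊔ W, le_trans hUW le_sup_right, ?_⟩
      have hx0 : x ≠ 0 := fun h => hx (h ▸ W.zero_mem)
      have hinf : (F ∙ x) ⊓ W = ⊥ := by
        rw [Submodule.eq_bot_iff]
        rintro y ⟨hy1, hy2⟩
        obtain ⟨c, rfl⟩ := Submodule.mem_span_singleton.1 hy1
        by_contra hne
        have hc : c ≠ 0 := by rintro rfl; simp at hne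
        exact hx (by simpa [smul_smul, inv_mul_cancel₀ hc] using W.smul_mem c⁻¹ hy2)
      have := Submodule.finrank_sup_add_finrank_inf_eq (F ∙ x) W
      rw [hinf, finrank_bot, finrank_span_singleton hx0, hW] at this
      omega
    · exact ⟨U, le_rfl, Nat.le_antisymm hU hge⟩

lemma card_ann {F V : Type*} [Field F] [Fintype F] [AddCommGroup V] [Module F V]
    [FiniteDimensional F V] [Fintype (Module.Dual F V)] (W : Submodule F V) :
    (univ.filter (fun φ : Module.Dual F V => ∀ w ∈ W, φ w = 0)).card
      = Fintype.card F ^ (finrank F V - finrank F W) := by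
  have h1 : (univ.filter (fun φ : Module.Dual F V => ∀ w ∈ W, φ w = 0)).card
      = Fintype.card {φ : Module.Dual F V // ∀ w ∈ W, φ w = 0} :=
    (Fintype.card_subtype _).symm
  have h2 : Fintype.card {φ : Module.Dual F V // ∀ w ∈ W, φ w = 0}
      = Fintype.card ↥(W.dualAnnihilator) := by
    apply Fintype.card_congr
    apply Equiv.subtypeEquivRight
    intro φ
    exact (Submodule.mem_dualAnnihilator φ).symm
  have h3 : Fintype.card ↥(W.dualAnnihilator)
      = Fintype.card F ^ finrank F ↥(W.dualAnnihilator) := by rw [card_eq_pow_finrank (K := F)]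
  have h4 : finrank F ↥(W.dualAnnihilator) = finrank F (V ⧸ W) :=
    (LinearEquiv.finrank_eq (Subspace.quotEquivAnnihilator W)).symm
  have h5 := Submodule.finrank_quotient_add_finrank W
  have h6 : finrank F W ≤ finrank F V := Submodule.finrank_le W
  rw [h1, h2, h3, h4]
  congr 1
  omega

lemma sum_wwt {F Ω X : Type*} [Field F] [Fintype F] [Fintype Ω] [AddCommGroup X] [Module F X]
    [FiniteDimensional F X] (ω : Ω → ℝ) (f : X →ₗ[F] (Ω → F)) (B : Submodule F X) [Fintype ↥B]
    (m : ℕ) (hB : finrank F ↥B = m) (hm : 1 ≤ m) :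
    ∑ β : ↥B, wwt ω (f ↑β)
      = ((Fintype.card F ^ m - Fintype.card F ^ (m-1) : ℕ) : ℝ)
        * WWt ω (f '' (B : Set X)) := by
  classical
  set q := Fintype.card F with hq
  have hcardB : Fintype.card ↥B = q ^ m := by
    rw [card_eq_pow_finrank (K := F), hB]
  have step1 : ∀ β : ↥B, wwt ω (f ↑β) = ∑ i : Ω, if f ↑β i ≠ 0 then ω i else 0 :=
    fun β => Finset.sum_filter _ _
  rw [Finset.sum_congr rfl (fun β _ => step1 β), Finset.sum_comm]
  have step2 : ((q ^ m - q ^ (m-1) : ℕ) : ℝ) * WWt ω (f '' (B : Set X))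
      = ∑ i : Ω, if (∃ x ∈ B, f x i ≠ 0) then ((q ^ m - q ^ (m-1) : ℕ) : ℝ) * ω i else 0 := by
    unfold WWt
    rw [Finset.mul_sum, ← Finset.sum_filter]
    congr 1
    ext i
    simp only [Finset.mem_filter, Finset.mem_univ, true_and]
    constructor
    · rintro ⟨β, ⟨x, hxB, rfl⟩, hβ⟩; exact ⟨x, hxB, hβ⟩
    · rintro ⟨x, hxB, hx⟩; exact ⟨f x, ⟨x, hxB, rfl⟩, hx⟩
  rw [step2]
  apply Finset.sum_congr rfl
  intro i _
  have hcount : ∑ β : ↥B, (if f ↑β i ≠ 0 then ω i else 0)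
      = ((univ.filter (fun β : ↥B => f ↑β i ≠ 0)).card : ℝ) * ω i := by
    rw [← Finset.sum_filter, Finset.sum_const, nsmul_eq_mul]
  rw [hcount]
  by_cases hex : ∃ x ∈ B, f x i ≠ 0
  · rw [if_pos hex]
    obtain ⟨x, hxB, hx⟩ := hex
    set ψ : ↥B →ₗ[F] F := (LinearMap.proj i).comp (f.comp B.subtype) with hψdef
    have hψ : ∀ β : ↥B, ψ β = f ↑β i := fun β => rfl
    have hsurj : Function.Surjective ψ := by
      intro c
      refine ⟨(c / f x i) • ⟨x, hxB⟩, ?_⟩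
      rw [map_smul, hψ, smul_eq_mul, div_mul_cancel₀ _ hx]
    have hrange : LinearMap.range ψ = ⊤ := LinearMap.range_eq_top.2 hsurj
    have hkerrank : finrank F ↥(LinearMap.ker ψ) = m - 1 := by
      have h1 := LinearMap.finrank_range_add_finrank_ker ψ
      rw [hrange, finrank_top, hB, Module.finrank_self] at h1
      omega
    have hkercard : Fintype.card ↥(LinearMap.ker ψ) = q ^ (m-1) := by
      rw [card_eq_pow_finrank (K := F), hkerrank]
    have hfiltereq : (univ.filter (fun β : ↥B => f ↑β i = 0)).card = q ^ (m-1) := by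
      rw [← Fintype.card_subtype]
      rw [← hkercard]
      apply Fintype.card_congr
      apply Equiv.subtypeEquivRight
      intro β
      rw [LinearMap.mem_ker, hψ]
    have hpart := Finset.card_filter_add_card_filter_not
      (s := (univ : Finset ↥B)) (p := fun β : ↥B => f ↑β i = 0)
    rw [Finset.card_univ, hcardB, hfiltereq] at hpart
    have : (univ.filter (fun β : ↥B => f ↑β i ≠ 0)).card = q ^ m - q ^ (m-1) := by
      have heq : (univ.filter (fun β : ↥B => ¬ (f ↑β i = 0))) 
          = (univ.filter (fun β : ↥B => f ↑β i ≠ 0)) := by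
        apply Finset.filter_congr; intro β _; rfl
      rw [heq] at hpart
      omega
    rw [this]
  · rw [if_neg hex]
    have : (univ.filter (fun β : ↥B => f ↑β i ≠ 0)) = ∅ := by
      apply Finset.filter_eq_empty_iff.2
      intro β _
      push_neg at hex ⊢
      exact hex ↑β β.2
    rw [this]
    simp

lemma keyK {F V : Type*} [Field F] [Fintype F] [AddCommGroup V] [Module F V]
    [FiniteDimensional F V] [Fintype V] (h : V → ℝ) (n : ℕ)
    (hn : finrank F V = n) (hn2 : 2 ≤ n) (h0 : h 0 = 0)
    (hsc : ∀ (c : F) (v : V), c ≠ 0 → h (c • v) = h v)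
    (hker : ∀ φ : Module.Dual F V, φ ≠ 0 → ∑ v ∈ univ.filter (fun v => φ v = 0), h v = 0)
    (θ : V) : h θ = 0 := by
  classical
  rcases eq_or_ne θ 0 with rfl | hθ
  · exact h0
  haveI : Finite (Module.Dual F V) := Module.finite_of_finite F
  haveI : Fintype (Module.Dual F V) := Fintype.ofFinite _
  set q := Fintype.card F with hqdef
  have hq2 : 2 ≤ q := Fintype.one_lt_card
  have hqR : (2 : ℝ) ≤ (q : ℝ) := by exact_mod_cast hq2
  -- counting functionals vanishing on one vector
  have cardv : ∀ v : V, v ≠ 0 →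
      (univ.filter (fun φ : Module.Dual F V => φ v = 0)).card = q ^ (n-1) := by
    intro v hv
    have hca := card_ann (F := F) (Submodule.span F ({v} : Set V))
    rw [finrank_span_singleton hv, hn] at hca
    rw [← hca]
    congr 1
    ext φ
    simp only [Finset.mem_filter, Finset.mem_univ, true_and]
    constructor
    · intro hφ w hw
      obtain ⟨c, rfl⟩ := Submodule.mem_span_singleton.1 hw
      simp [map_smul, hφ]
    · intro H; exact H v (Submodule.mem_span_singleton_self v)
  -- counting functionals vanishing on θ and v
  have cardpair : ∀ v : V,
      (univ.filter (fun φ : Module.Dual F V => φ θ = 0 ∧ φ v = 0)).card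
        = q ^ (n - finrank F (Submodule.span F ({θ, v} : Set V))) := by
    intro v
    have hca := card_ann (F := F) (Submodule.span F ({θ, v} : Set V))
    rw [hn] at hca
    rw [← hca]
    congr 1
    ext φ
    simp only [Finset.mem_filter, Finset.mem_univ, true_and]
    constructor
    · rintro ⟨h1, h2⟩ w hw
      have hle : Submodule.span F ({θ, v} : Set V) ≤ LinearMap.ker φ := by
        rw [Submodule.span_le]
        rintro x hx
        rcases Set.mem_insert_iff.1 hx with rfl | hx
        · exact h1
        · rw [Set.mem_singleton_iff] at hx; rw [hx]; exact h2
      exact hle hw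
    · intro H
      exact ⟨H θ (Submodule.subset_span (by simp)), H v (Submodule.subset_span (by simp))⟩
  -- span computations
  have hspan1 : ∀ v : V, v ∈ Submodule.span F ({θ} : Set V) →
      Submodule.span F ({θ, v} : Set V) = Submodule.span F ({θ} : Set V) := by
    intro v hv
    apply le_antisymm
    · rw [Submodule.span_le]
      rintro x hx
      rcases Set.mem_insert_iff.1 hx with h' | hx
      · rw [h']; exact Submodule.mem_span_singleton_self θ
      · rw [Set.mem_singleton_iff] at hx; rw [hx]; exact hv
    · exact Submodule.span_mono (by simp)
  have hrank2 : ∀ v : V, v ∉ Submodule.span F ({θ} : Set V) →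
      finrank F (Submodule.span F ({θ, v} : Set V)) = 2 := by
    intro v hv
    have hv0 : v ≠ 0 := fun hh => hv (hh ▸ Submodule.zero_mem _)
    rw [show ({θ, v} : Set V) = insert θ {v} from rfl, Submodule.span_insert]
    have hinf : (F ∙ θ) ⊓ (F ∙ v) = ⊥ := by
      rw [Submodule.eq_bot_iff]
      rintro y ⟨hy1, hy2⟩
      obtain ⟨c, rfl⟩ := Submodule.mem_span_singleton.1 hy1
      by_contra hne
      have hc : c ≠ 0 := by rintro rfl; simp at hne
      obtain ⟨d, hd⟩ := Submodule.mem_span_singleton.1 hy2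
      have hd0 : d ≠ 0 := by
        rintro rfl
        rw [zero_smul] at hd
        exact hne hd.symm
      refine hv (Submodule.mem_span_singleton.2 ⟨d⁻¹ * c, ?_⟩)
      rw [mul_smul]
      rw [← hd, inv_smul_smul₀ hd0]
    have := Submodule.finrank_sup_add_finrank_inf_eq (F ∙ θ) (F ∙ v)
    rw [hinf, finrank_bot, finrank_span_singleton hθ, finrank_span_singleton hv0] at this
    omega
  -- Step A : total sum is zero
  have hS : ∑ v : V, h v = 0 := by
    have hfilter0 : univ.filter (fun v : V => (0 : Module.Dual F V) v = 0) = univ := by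
      simp
    have hT : ∑ φ : Module.Dual F V, ∑ v ∈ univ.filter (fun v => φ v = 0), h v
        = ∑ v : V, h v := by
      rw [Finset.sum_eq_single_of_mem (0 : Module.Dual F V) (mem_univ _)
        (fun φ _ hφ => hker φ hφ), hfilter0]
    have hT2 : ∑ φ : Module.Dual F V, ∑ v ∈ univ.filter (fun v => φ v = 0), h v
        = ∑ v : V, ((univ.filter (fun φ : Module.Dual F V => φ v = 0)).card : ℝ) * h v := by
      rw [Finset.sum_congr rfl (fun φ (_ : φ ∈ univ) => Finset.sum_filter
        (fun v => φ v = 0) h), Finset.sum_comm]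
      apply Finset.sum_congr rfl
      intro v _
      rw [← Finset.sum_filter, Finset.sum_const, nsmul_eq_mul]
    have hT3 : ∑ v : V, ((univ.filter (fun φ : Module.Dual F V => φ v = 0)).card : ℝ) * h v
        = ((q ^ (n-1) : ℕ) : ℝ) * ∑ v : V, h v := by
      rw [Finset.mul_sum]
      apply Finset.sum_congr rfl
      intro v _
      rcases eq_or_ne v 0 with rfl | hv
      · rw [h0]; ring
      · rw [cardv v hv]
    rw [hT2, hT3] at hT
    have hc1 : (1 : ℝ) < ((q ^ (n-1) : ℕ) : ℝ) := by
      have : 1 < q ^ (n-1) := Nat.one_lt_pow (by omega) hq2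
      exact_mod_cast this
    have hfac : (((q ^ (n-1) : ℕ) : ℝ) - 1) * (∑ v : V, h v) = 0 := by
      linear_combination hT
    rcases mul_eq_zero.1 hfac with hbad | hok
    · linarith
    · exact hok
  -- Step B : sum over functionals vanishing at θ
  have hmemθ : (0 : Module.Dual F V) ∈ univ.filter
      (fun φ : Module.Dual F V => φ θ = 0) := by simp
  have hT : ∑ φ ∈ univ.filter (fun φ : Module.Dual F V => φ θ = 0),
      ∑ v ∈ univ.filter (fun v => φ v = 0), h v = 0 := by
    rw [Finset.sum_eq_single_of_mem (0 : Module.Dual F V) hmemθ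
      (fun φ _ hφ => hker φ hφ)]
    have hfilter0 : univ.filter (fun v : V => (0 : Module.Dual F V) v = 0) = univ := by
      simp
    rw [hfilter0]
    exact hS
  have hT2 : ∑ φ ∈ univ.filter (fun φ : Module.Dual F V => φ θ = 0),
      ∑ v ∈ univ.filter (fun v => φ v = 0), h v
      = ∑ v : V,
        ((univ.filter (fun φ : Module.Dual F V => φ θ = 0 ∧ φ v = 0)).card : ℝ) * h v := by
    rw [Finset.sum_congr rfl (fun φ (_ : φ ∈ univ.filter
      (fun φ : Module.Dual F V => φ θ = 0)) => Finset.sum_filter (fun v => φ v = 0) h),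
      Finset.sum_comm]
    apply Finset.sum_congr rfl
    intro v _
    rw [← Finset.sum_filter, Finset.filter_filter, Finset.sum_const, nsmul_eq_mul]
  have hT3 : ∑ v : V,
      ((univ.filter (fun φ : Module.Dual F V => φ θ = 0 ∧ φ v = 0)).card : ℝ) * h v
      = ∑ v ∈ univ.filter (fun v : V => v ∈ Submodule.span F ({θ} : Set V)),
          ((q ^ (n-1) : ℕ) : ℝ) * h v
        + ∑ v ∈ univ.filter (fun v : V => ¬ v ∈ Submodule.span F ({θ} : Set V)),
          ((q ^ (n-2) : ℕ) : ℝ) * h v := by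
    rw [← Finset.sum_filter_add_sum_filter_not univ
      (fun v : V => v ∈ Submodule.span F ({θ} : Set V))]
    congr 1
    · apply Finset.sum_congr rfl
      intro v hv
      simp only [Finset.mem_filter] at hv
      rw [cardpair v, hspan1 v hv.2, finrank_span_singleton hθ]
    · apply Finset.sum_congr rfl
      intro v hv
      simp only [Finset.mem_filter] at hv
      rw [cardpair v, hrank2 v hv.2]
  -- the sum over the line spanned by θ
  have hA : ∑ v ∈ univ.filter (fun v : V => v ∈ Submodule.span F ({θ} : Set V)), h v
      = ((q : ℝ) - 1) * h θ := by
    have himg : univ.filter (fun v : V => v ∈ Submodule.span F ({θ} : Set V))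
        = Finset.image (fun c : F => c • θ) univ := by
      ext v
      simp [Submodule.mem_span_singleton]
    have hinj : ∀ a ∈ (univ : Finset F), ∀ b ∈ (univ : Finset F),
        a • θ = b • θ → a = b := by
      intro a _ b _ hab
      have hz : (a - b) • θ = 0 := by rw [sub_smul, hab, sub_self]
      rcases smul_eq_zero.1 hz with h1 | h2
      · exact sub_eq_zero.1 h1
      · exact absurd h2 hθ
    rw [himg, Finset.sum_image hinj]
    rw [← Finset.sum_filter_add_sum_filter_not univ (fun c : F => c = 0)]
    have e1 : ∑ c ∈ univ.filter (fun c : F => c = 0), h (c • θ) = 0 := by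
      apply Finset.sum_eq_zero
      intro c hc
      rw [(Finset.mem_filter.1 hc).2, zero_smul, h0]
    have e2 : ∑ c ∈ univ.filter (fun c : F => ¬ c = 0), h (c • θ)
        = ((q : ℝ) - 1) * h θ := by
      rw [Finset.sum_congr rfl (fun c hc => hsc c θ (Finset.mem_filter.1 hc).2),
        Finset.sum_const, nsmul_eq_mul]
      congr 1
      have : (univ.filter (fun c : F => ¬ c = 0)).card = q - 1 := by
        have := Finset.card_filter_add_card_filter_not
          (s := (univ : Finset F)) (p := fun c : F => c = 0)
        rw [Finset.card_univ] at this
        have h0card : (univ.filter (fun c : F => c = 0)).card = 1 := by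
          have : (univ.filter (fun c : F => c = 0)) = {0} := by
            ext c; simp
          rw [this, Finset.card_singleton]
        omega
      rw [this]
      push_cast [Nat.cast_sub (by omega : 1 ≤ q)]
      ring
    rw [e1, e2]
    ring
  have hnotA : ∑ v ∈ univ.filter (fun v : V => ¬ v ∈ Submodule.span F ({θ} : Set V)), h v
      = - (((q : ℝ) - 1) * h θ) := by
    have := Finset.sum_filter_add_sum_filter_not univ
      (fun v : V => v ∈ Submodule.span F ({θ} : Set V)) h
    rw [hS] at this
    linarith [hA]
  rw [hT2, hT3] at hT
  rw [← Finset.mul_sum, ← Finset.mul_sum] at hT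
  rw [hA, hnotA] at hT
  -- hT : c1 * ((q-1) h θ) + c2 * (-( (q-1) h θ)) = 0
  have hpow : ((q ^ (n-2) : ℕ) : ℝ) < ((q ^ (n-1) : ℕ) : ℝ) := by
    have : q ^ (n-2) < q ^ (n-1) := Nat.pow_lt_pow_right hq2 (by omega)
    exact_mod_cast this
  have hfac : ((((q ^ (n-1) : ℕ) : ℝ)) - (((q ^ (n-2) : ℕ) : ℝ))) * (((q:ℝ) - 1) * h θ) = 0 := by
    linear_combination hT
  rcases mul_eq_zero.1 hfac with h1 | h2
  · linarith
  · rcases mul_eq_zero.1 h2 with h3 | h4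
    · linarith
    · exact h4

set_option maxHeartbeats 2000000 in
theorem stmt3 {F Ω : Type*} [Field F] [Fintype F] [Fintype Ω] [Nonempty Ω]
    {X : Type*} [AddCommGroup X] [Module F X] [FiniteDimensional F X]
    (ω : Ω → ℝ) (hω : ∀ i, 0 < ω i)
    (f g : X →ₗ[F] (Ω → F)) (k m : ℕ)
    (hk : Module.finrank F X = k) (hk1 : 1 ≤ k)
    (hm1 : 1 ≤ m) (hm2 : m ≤ k - 1)
    (h : ∀ B : Submodule F X, Module.finrank F B = m →
      WWt ω (f '' (B : Set X)) = WWt ω (g '' (B : Set X))) :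
    ∀ θ : X, wwt ω (f θ) = wwt ω (g θ) := by
  intro θ
  classical
  haveI : Finite X := Module.finite_of_finite F
  haveI : Fintype X := Fintype.ofFinite X
  rcases eq_or_ne θ 0 with rfl | hθ
  · rw [map_zero, map_zero]
  have hm1k : m + 1 ≤ k := by omega
  obtain ⟨C, hθC, hC⟩ := exists_super (F := F) (X := X) (m+1)
    (by rw [hk]; omega) (Submodule.span F {θ})
    (by rw [finrank_span_singleton hθ]; omega)
  have hθmem : θ ∈ C := hθC (Submodule.mem_span_singleton_self θ)
  haveI : Fintype ↥C := Fintype.ofFinite _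
  set H : ↥C → ℝ := fun v => wwt ω (f ↑v) - wwt ω (g ↑v) with hH
  have hH0 : H 0 = 0 := by
    show wwt ω (f ↑(0 : ↥C)) - wwt ω (g ↑(0 : ↥C)) = 0
    rw [ZeroMemClass.coe_zero, map_zero, map_zero, sub_self]
  have hHsc : ∀ (c : F) (v : ↥C), c ≠ 0 → H (c • v) = H v := by
    intro c v hc
    show wwt ω (f ↑(c • v)) - wwt ω (g ↑(c • v)) = wwt ω (f ↑v) - wwt ω (g ↑v)
    rw [SetLike.val_smul, map_smul, map_smul, wwt_smul ω hc, wwt_smul ω hc]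
  have hHker : ∀ φ : Module.Dual F ↥C, φ ≠ 0 →
      ∑ v ∈ univ.filter (fun v : ↥C => φ v = 0), H v = 0 := by
    intro φ hφ
    set B : Submodule F X := (LinearMap.ker φ).map C.subtype with hBdef
    haveI : Fintype ↥B := Fintype.ofFinite _
    have hBrank : finrank F ↥B = m := by
      rw [hBdef, Submodule.finrank_map_subtype_eq]
      have hsurj : Function.Surjective φ := by
        obtain ⟨v, hv⟩ := DFunLike.ne_iff.1 hφ
        intro c
        refine ⟨(c / φ v) • v, ?_⟩
        rw [map_smul, smul_eq_mul, div_mul_cancel₀ _ (by simpa using hv)]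
      have h1 := LinearMap.finrank_range_add_finrank_ker φ
      rw [LinearMap.range_eq_top.2 hsurj, finrank_top, Module.finrank_self, hC] at h1
      omega
    have hWWt := h B hBrank
    have hsf := sum_wwt ω f B m hBrank hm1
    have hsg := sum_wwt ω g B m hBrank hm1
    have hsum : ∑ β : ↥B, (wwt ω (f ↑β) - wwt ω (g ↑β)) = 0 := by
      rw [Finset.sum_sub_distrib, hsf, hsg, hWWt, sub_self]
    have htrans : ∑ v ∈ univ.filter (fun v : ↥C => φ v = 0), H v
        = ∑ β : ↥B, (wwt ω (f ↑β) - wwt ω (g ↑β)) := by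
      rw [Finset.sum_subtype (p := fun v : ↥C => φ v = 0) (univ.filter (fun v : ↥C => φ v = 0)) (by simp) H]
      refine Fintype.sum_bijective
        (fun x : {v : ↥C // φ v = 0} => (⟨↑↑x, ⟨↑x, LinearMap.mem_ker.2 x.2, rfl⟩⟩ : ↥B))
        ⟨?_, ?_⟩ _ _ (fun x => rfl)
      · intro x y hxy
        simp only [Subtype.mk.injEq] at hxy
        exact Subtype.ext (Subtype.ext (congrArg (fun z : ↥B => (z : X)) hxy))
      · rintro ⟨β, hβ⟩
        obtain ⟨y, hy, hyeq⟩ := Submodule.mem_map.1 hβ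
        exact ⟨⟨y, LinearMap.mem_ker.1 hy⟩, Subtype.ext hyeq⟩
    rw [htrans]
    exact hsum
  have key := keyK (F := F) (V := ↥C) H (m+1) hC (by omega) hH0 hHsc hHker ⟨θ, hθmem⟩
  have : wwt ω (f θ) - wwt ω (g θ) = 0 := key
  linarith
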